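/- Every connected graph of order n has at least n(n+1)/2 nonempty connected vertex sets: N(G) ≥ n(n+1)/2. -/

import Mathlib

open Finset Filter

attribute [local instance] Classical.propDecidable

noncomputable def connSets {V : Type*} [Fintype V] (G : SimpleGraph V) : Finset (Finset V) :=
  Finset.univ.filter fun U => U.Nonempty ∧ (G.induce (U : Set V)).Connected

section Aux

universe u

variable {V : Type u}

lemma mem_connSets [Fintype V] (G : SimpleGraph V) (U : Finset V) :
    U ∈ connSets G ↔ U.Nonempty ∧ (G.induce (U : Set V)).Connected := by
  rw [connSets, Finset.mem_filter]
  simp only [Finset.mem_univ, true_and]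

lemma induce_singleton_connected (G : SimpleGraph V) (v : V) :
    (G.induce ({v} : Set V)).Connected := by
  rw [SimpleGraph.connected_iff]
  refine ⟨?_, ⟨⟨v, rfl⟩⟩⟩
  rintro ⟨a, ha⟩ ⟨b, hb⟩
  rcases ha with rfl
  rcases hb with rfl
  exact SimpleGraph.Reachable.refl _

/-- Growth lemma: there is a connected set of each size `k` (1 ≤ k ≤ n) containing `v`. -/
lemma exists_conn_of_card [Fintype V] (G : SimpleGraph V) (hG : G.Connected) (v : V) :
    ∀ k, 1 ≤ k → k ≤ Fintype.card V →
      ∃ U : Finset V, v ∈ U ∧ U.card = k ∧ (G.induce (U : Set V)).Connected := by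
  intro k
  induction k with
  | zero => omega
  | succ k ih =>
    intro _ h2
    rcases Nat.eq_zero_or_pos k with hk | hk
    · subst hk
      refine ⟨{v}, Finset.mem_singleton_self v, Finset.card_singleton v, ?_⟩
      rw [Finset.coe_singleton]
      exact induce_singleton_connected G v
    · obtain ⟨U, hvU, hcard, hconn⟩ := ih hk (by omega)
      have hne : (U : Finset V) ≠ Finset.univ := by
        intro h
        rw [h, Finset.card_univ] at hcard
        omega
      obtain ⟨w, hw⟩ : ∃ w, w ∉ U := by
        by_contra h
        push_neg at h
        exact hne (Finset.eq_univ_iff_forall.mpr h)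
      obtain ⟨p⟩ := hG v w
      obtain ⟨d, _, hdf, hds⟩ := p.exists_boundary_dart (U : Set V) (by exact_mod_cast hvU)
        (by exact_mod_cast hw)
      have hdsU : d.snd ∉ U := by exact_mod_cast hds
      refine ⟨insert d.snd U, Finset.mem_insert_of_mem hvU, ?_, ?_⟩
      · rw [Finset.card_insert_of_notMem hdsU, hcard]
      · have : (((insert d.snd U : Finset V) : Set V)) = ({d.snd} : Set V) ∪ (U : Set V) := by
          rw [Finset.coe_insert, Set.insert_eq]
        rw [this]
        exact SimpleGraph.connected_induce_union (induce_singleton_connected G d.snd).preconnected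
            hconn.preconnected
          rfl hdf d.adj.symm

/-- A connected graph on at least two vertices has a non-cut vertex. -/
lemma exists_noncut [Fintype V] (G : SimpleGraph V) (hG : G.Connected)
    (h2 : 2 ≤ Fintype.card V) : ∃ v : V, (G.induce ({v}ᶜ : Set V)).Connected := by
  have hne : Nonempty V := hG.nonempty
  obtain ⟨u⟩ := hne
  obtain ⟨v, -, hv⟩ := Finset.exists_max_image (Finset.univ : Finset V) (G.dist u)
    ⟨u, Finset.mem_univ u⟩
  refine ⟨v, ?_⟩
  have huv : u ≠ v := by
    rintro rfl
    have hall : ∀ b : V, b = u := by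
      intro b
      have := hv b (Finset.mem_univ b)
      rw [SimpleGraph.dist_self] at this
      have h0 : G.dist u b = 0 := Nat.le_zero.mp this
      exact ((hG.dist_eq_zero_iff).mp h0).symm
    have : Fintype.card V ≤ 1 := Fintype.card_le_one_iff.mpr (fun a b => by rw [hall a, hall b])
    omega
  have humem : u ∈ ({v}ᶜ : Set V) := by simpa using huv
  apply G.induce_connected_of_patches u humem
  intro w hw
  have hwv : w ≠ v := by simpa using hw
  obtain ⟨p, hp⟩ := hG.exists_walk_length_eq_dist u w
  have hvs : v ∉ p.support := by
    intro hvp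
    have h1 : G.dist u v ≤ (p.takeUntil v hvp).length := SimpleGraph.dist_le _
    have hsplit : (p.takeUntil v hvp).length + (p.dropUntil v hvp).length = p.length := by
      rw [← SimpleGraph.Walk.length_append, SimpleGraph.Walk.take_spec]
    have h3 : 1 ≤ (p.dropUntil v hvp).length := by
      rcases Nat.eq_zero_or_pos (p.dropUntil v hvp).length with h0 | h0
      · exact absurd (SimpleGraph.Walk.eq_of_length_eq_zero h0) hwv.symm
      · omega
    have h4 : G.dist u w ≤ G.dist u v := hv w (Finset.mem_univ w)
    omega
  refine ⟨{x | x ∈ p.support}, ?_, p.start_mem_support, p.end_mem_support, ?_⟩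
  · intro x hx
    simp only [Set.mem_setOf_eq] at hx
    simp only [Set.mem_compl_iff, Set.mem_singleton_iff]
    rintro rfl
    exact hvs hx
  · exact (p.connected_induce_support).preconnected _ _

/-- Transfer of connectivity along the inclusion of a subset. -/
lemma induce_map_connected (G : SimpleGraph V) (s : Set V) (U : Finset ↥s)
    (h : ((G.induce s).induce ((U : Finset ↥s) : Set ↥s)).Connected) :
    (G.induce (((U.map (Function.Embedding.subtype _) : Finset V)) : Set V)).Connected := by
  have hco : (((U.map (Function.Embedding.subtype _) : Finset V)) : Set V)
      = Subtype.val '' ((U : Finset ↥s) : Set ↥s) := by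
    ext x
    simp
  rw [hco]
  let e : ↥((U : Finset ↥s) : Set ↥s) ≃ ↥(Subtype.val '' ((U : Finset ↥s) : Set ↥s)) :=
    Equiv.Set.image Subtype.val _ Subtype.val_injective
  have iso : (G.induce s).induce ((U : Finset ↥s) : Set ↥s)
      ≃g G.induce (Subtype.val '' ((U : Finset ↥s) : Set ↥s)) := by
    refine ⟨e, ?_⟩
    rintro ⟨⟨a, ha⟩, ha'⟩ ⟨⟨b, hb⟩, hb'⟩
    exact Iff.rfl
  exact iso.connected_iff.mp h

lemma connSets_card_ge : ∀ (n : ℕ) (V : Type u) [Fintype V] (G : SimpleGraph V),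
    Fintype.card V = n → G.Connected → n * (n + 1) ≤ 2 * (connSets G).card := by
  intro n
  induction n with
  | zero => intro V _ G _ _; simp
  | succ n ih =>
    intro V _ G hcard hG
    have hne : Nonempty V := hG.nonempty
    rcases Nat.eq_zero_or_pos n with hn | hn
    · -- one vertex
      subst hn
      obtain ⟨v⟩ := hne
      have hv : ({v} : Finset V) ∈ connSets G := by
        rw [mem_connSets]
        refine ⟨⟨v, Finset.mem_singleton_self v⟩, ?_⟩
        rw [Finset.coe_singleton]
        exact induce_singleton_connected G v
      have : 1 ≤ (connSets G).card := Finset.card_pos.mpr ⟨_, hv⟩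
      omega
    · -- at least two vertices
      obtain ⟨v, hvconn⟩ := exists_noncut G hG (by omega)
      set s : Set V := ({v}ᶜ : Set V) with hs
      have hscard : Fintype.card ↥s = n := by
        have h1 : Fintype.card ↥s = Fintype.card {x : V // ¬ x = v} :=
          Fintype.card_congr (Equiv.subtypeEquivRight (by intro x; simp [hs]))
        have h2 := Fintype.card_subtype_compl (fun x : V => x = v)
        have h3 : Fintype.card {x : V // x = v} = 1 := Fintype.card_subtype_eq v
        omega
      have hIH := ih ↥s (G.induce s) hscard hvconn
      -- family A : connected sets avoiding v
      set A : Finset (Finset V) :=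
        (connSets (G.induce s)).image (fun U => U.map (Function.Embedding.subtype _)) with hA
      have hAcard : A.card = (connSets (G.induce s)).card := by
        rw [hA]
        exact Finset.card_image_of_injective _ (Finset.map_injective _)
      have hAsub : A ⊆ connSets G := by
        intro W hW
        rw [hA, Finset.mem_image] at hW
        obtain ⟨U, hU, rfl⟩ := hW
        rw [mem_connSets] at hU ⊢
        obtain ⟨hUne, hUconn⟩ := hU
        exact ⟨hUne.map, induce_map_connected G s U hUconn⟩
      have hAnotv : ∀ W ∈ A, v ∉ W := by
        intro W hW hvW
        rw [hA, Finset.mem_image] at hW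
        obtain ⟨U, -, rfl⟩ := hW
        rw [Finset.mem_map] at hvW
        obtain ⟨⟨x, hx⟩, -, hxe⟩ := hvW
        simp only [Function.Embedding.coe_subtype] at hxe
        rw [hs] at hx
        exact hx (by simp [hxe])
      -- family B : connected sets containing v, one of each size
      have hBex : ∀ k ∈ Finset.Icc 1 (n + 1), ∃ U : Finset V,
          v ∈ U ∧ U.card = k ∧ (G.induce (U : Set V)).Connected := by
        intro k hk
        rw [Finset.mem_Icc] at hk
        exact exists_conn_of_card G hG v k hk.1 (by omega)
      choose! f hf1 hf2 hf3 using hBex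
      set B : Finset (Finset V) := (Finset.Icc 1 (n + 1)).image f with hB
      have hBcard : B.card = n + 1 := by
        rw [hB, Finset.card_image_of_injOn, Nat.card_Icc]
        · omega
        · intro a ha b hb hab
          rw [← hf2 a ha, ← hf2 b hb, hab]
      have hBsub : B ⊆ connSets G := by
        intro W hW
        rw [hB, Finset.mem_image] at hW
        obtain ⟨k, hk, rfl⟩ := hW
        rw [mem_connSets]
        exact ⟨⟨v, hf1 k hk⟩, hf3 k hk⟩
      have hBv : ∀ W ∈ B, v ∈ W := by
        intro W hW
        rw [hB, Finset.mem_image] at hW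
        obtain ⟨k, hk, rfl⟩ := hW
        exact hf1 k hk
      have hdisj : Disjoint A B := by
        rw [Finset.disjoint_left]
        intro W hWA hWB
        exact hAnotv W hWA (hBv W hWB)
      have hunion : (A ∪ B).card = A.card + B.card := Finset.card_union_of_disjoint hdisj
      have hsub : A ∪ B ⊆ connSets G := Finset.union_subset hAsub hBsub
      have hle : A.card + B.card ≤ (connSets G).card := by
        rw [← hunion]; exact Finset.card_le_card hsub
      rw [hAcard, hBcard] at hle
      nlinarith [hIH, hle]

end Aux

theorem stmt_16 {V : Type*} [Fintype V] (G : SimpleGraph V) (hG : G.Connected) :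
    ((connSets G).card : ℝ) ≥ Fintype.card V * (Fintype.card V + 1) / 2 := by
  have h := connSets_card_ge (Fintype.card V) V G rfl hG
  have h' : (Fintype.card V * (Fintype.card V + 1) : ℝ) ≤ 2 * (connSets G).card := by
    exact_mod_cast h
  linarith
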